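/- For every integer K ≥ 1 and every index ℓ with 2 ≤ ℓ ≤ 2K+1, the Flaschka–Newell bracket of s_ℓ with the matrix F = F_K satisfies, entrywise, {s_ℓ, F}_{FN} = (−1)^ℓ (s_ℓ/2)[F, σ3], where [X, Y] = XY − YX denotes the commutator. -/

import Mathlib

noncomputable section

open Matrix Finset

/-- Partial derivative with respect to the Stokes coordinate `s_j`
(0-based index `j`, corresponding to the paper's `s_{j+1}`) of a function
of `(s, λ) ∈ ℂ^{2K+2} × ℂ`. -/
def pS (K : ℕ) (j : Fin (2*K+2)) (f : (Fin (2*K+2) → ℂ) → ℂ → ℂ)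
    (s : Fin (2*K+2) → ℂ) (lam : ℂ) : ℂ :=
  fderiv ℂ (fun t => f t lam) s (Pi.single j 1)

/-- Partial derivative with respect to `λ`. -/
def pL (K : ℕ) (f : (Fin (2*K+2) → ℂ) → ℂ → ℂ)
    (s : Fin (2*K+2) → ℂ) (lam : ℂ) : ℂ :=
  deriv (f s) lam

/-- The structure constant `{s_{j+1}, s_{l+1}}_{FN}` (0-based indices `j < l`):
`δ_{j+1,l} − δ_{j,0} δ_{l,2K+1} λ^{−2} + (−1)^{j+l+1} s_j s_l`
(which is the paper's `δ_{j,l−1} − δ_{j,1}δ_{l,2K+2} λ^{−2} + (−1)^{j−l+1} s_j s_l`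
in 1-based indexing). -/
def cSS (K : ℕ) (j l : Fin (2*K+2)) (s : Fin (2*K+2) → ℂ) (lam : ℂ) : ℂ :=
  (if (j:ℕ)+1 = (l:ℕ) then 1 else 0)
  - (if (j:ℕ) = 0 ∧ (l:ℕ) = 2*K+1 then (lam^2)⁻¹ else 0)
  + (-1:ℂ)^((j:ℕ)+(l:ℕ)+1) * s j * s l

/-- The structure constant `{s_{j+1}, λ}_{FN} = (−1)^{j+1} s_{j+1} λ` (0-based `j`). -/
def cSL (K : ℕ) (j : Fin (2*K+2)) (s : Fin (2*K+2) → ℂ) (lam : ℂ) : ℂ :=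
  (-1:ℂ)^((j:ℕ)+1) * s j * lam

/-- The Flaschka–Newell bracket of two functions of `(s, λ)`:
`{f,g} = Σ_{j<l} {s_j,s_l}·(∂_j f ∂_l g − ∂_l f ∂_j g) + Σ_j {s_j,λ}·(∂_j f ∂_λ g − ∂_λ f ∂_j g)`. -/
def fnBr (K : ℕ) (f g : (Fin (2*K+2) → ℂ) → ℂ → ℂ)
    (s : Fin (2*K+2) → ℂ) (lam : ℂ) : ℂ :=
  (∑ j : Fin (2*K+2), ∑ l : Fin (2*K+2),
    if (j:ℕ) < (l:ℕ) then
      cSS K j l s lam *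
        (pS K j f s lam * pS K l g s lam - pS K l f s lam * pS K j g s lam)
    else 0)
  + ∑ j : Fin (2*K+2),
      cSL K j s lam * (pS K j f s lam * pL K g s lam - pL K f s lam * pS K j g s lam)

/-- Upper-triangular unipotent 2×2 matrix `[[1, a], [0, 1]]`. -/
def Umat (a : ℂ) : Matrix (Fin 2) (Fin 2) ℂ := !![1, a; 0, 1]

/-- Lower-triangular unipotent 2×2 matrix `[[1, 0], [a, 1]]`. -/
def Lmat (a : ℂ) : Matrix (Fin 2) (Fin 2) ℂ := !![1, 0; a, 1]

/-- The Pauli matrix `σ3`. -/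
def sigma3 : Matrix (Fin 2) (Fin 2) ℂ := !![1, 0; 0, -1]

/-- The matrix `σ₊`. -/
def sigmaP : Matrix (Fin 2) (Fin 2) ℂ := !![0, 1; 0, 0]

/-- The matrix `σ₋`. -/
def sigmaM : Matrix (Fin 2) (Fin 2) ℂ := !![0, 0; 1, 0]

/-- The matrix `F = F_K(s, λ) = [[1,s_1],[0,1]]·[[1,0],[s_2,1]] ⋯
[[1,s_{2K+1}],[0,1]]·[[1,0],[s_{2K+2},1]]·diag(λ, λ⁻¹)`
(here `s` is 0-based: `s i` is the paper's `s_{i+1}`). -/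
def Fmat (K : ℕ) (s : Fin (2*K+2) → ℂ) (lam : ℂ) : Matrix (Fin 2) (Fin 2) ℂ :=
  ((List.ofFn fun i : Fin (K+1) =>
      Umat (s ⟨2*(i:ℕ), by have := i.isLt; omega⟩) *
      Lmat (s ⟨2*(i:ℕ)+1, by have := i.isLt; omega⟩)).prod)
    * !![lam, 0; 0, lam⁻¹]


/-! ### Auxiliary development -/

/-- nilpotent direction at slot `i` -/
def Em (i : ℕ) : Matrix (Fin 2) (Fin 2) ℂ := if i % 2 = 0 then sigmaP else sigmaM

/-- elementary factor at slot `i` -/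
def Mm (u : ℕ → ℂ) (i : ℕ) : Matrix (Fin 2) (Fin 2) ℂ := 1 + u i • Em i

/-- product of the factors at slots `j, j+1, …, n-1` -/
def Rm (u : ℕ → ℂ) (j n : ℕ) : Matrix (Fin 2) (Fin 2) ℂ :=
  ((List.range' j (n - j)).map (Mm u)).prod

def Dm (lam : ℂ) : Matrix (Fin 2) (Fin 2) ℂ := !![lam, 0; 0, lam⁻¹]

def uex (K : ℕ) (t : Fin (2*K+2) → ℂ) (i : ℕ) : ℂ := if h : i < 2*K+2 then t ⟨i,h⟩ else 0

lemma Rm_self (u : ℕ → ℂ) (j : ℕ) : Rm u j j = 1 := by simp [Rm]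

lemma Rm_succ (u : ℕ → ℂ) {j n : ℕ} (h : j ≤ n) : Rm u j (n+1) = Rm u j n * Mm u n := by
  have h1 : n + 1 - j = (n - j) + 1 := by omega
  have h2 : j + (n - j) = n := by omega
  rw [Rm, h1, List.range'_concat]; simp [Rm, h2]

lemma Rm_cons (u : ℕ → ℂ) {j n : ℕ} (h : j < n) : Rm u j n = Mm u j * Rm u (j+1) n := by
  have h1 : n - j = (n - (j+1)) + 1 := by omega
  rw [Rm, h1, List.range'_succ]; simp [Rm]

lemma Rm_mul (u : ℕ → ℂ) {i j n : ℕ} (h1 : i ≤ j) (h2 : j ≤ n) :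
    Rm u i n = Rm u i j * Rm u j n := by
  have key : List.range' i (j - i) ++ List.range' j (n - j) = List.range' i (n - i) := by
    have := List.range'_append (s := i) (m := j-i) (n := n-j) (step := 1)
    simp only [one_mul] at this
    rw [show i + (j-i) = j by omega] at this
    rw [show j - i + (n - j) = n - i by omega] at this
    exact this
  rw [Rm, Rm, Rm, ← List.prod_append, ← List.map_append, key]

lemma Rm_congr' {u v : ℕ → ℂ} (j n : ℕ) (h : ∀ i, j ≤ i → i < n → u i = v i) :
    Rm u j n = Rm v j n := by
  unfold Rm
  congr 1
  apply List.map_congr_left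
  intro i hi
  rw [List.mem_range'_1] at hi
  have := h i hi.1 (by omega)
  simp [Mm, this]

lemma commA (u : ℕ → ℂ) (i : ℕ) :
    Mm u i * sigma3 - sigma3 * Mm u i = ((-1:ℂ)^(i+1) * (2 * u i)) • Em i := by
  rcases Nat.even_or_odd i with h | h
  · have h2 : i % 2 = 0 := Nat.even_iff.mp h
    have hp : (-1:ℂ)^(i+1) = -1 := (h.add_one).neg_one_pow
    rw [hp]
    ext a b
    fin_cases a <;> fin_cases b <;>
      simp [Mm, Em, sigma3, sigmaP, h2, Matrix.one_fin_two, Matrix.mul_apply,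
        Fin.sum_univ_two] <;> ring
  · have h2 : i % 2 = 1 := Nat.odd_iff.mp h
    have hp : (-1:ℂ)^(i+1) = 1 := (h.add_one).neg_one_pow
    rw [hp]
    ext a b
    fin_cases a <;> fin_cases b <;>
      simp [Mm, Em, sigma3, sigmaM, h2, Matrix.one_fin_two, Matrix.mul_apply,
        Fin.sum_univ_two] <;> ring

lemma localB (u : ℕ → ℂ) (m : ℕ) (hm : 1 ≤ m) :
    Mm u (m-1) * Mm u m * Em (m+1) - Em (m-1) * (Mm u m * Mm u (m+1))
      = ((-1:ℂ)^m * u m) • (Mm u (m-1) * sigma3 * (Mm u m * Mm u (m+1)))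
        - (u m ^ 2) • (Mm u (m-1) * Em m * Mm u (m+1)) := by
  rcases Nat.even_or_odd m with h | h
  · have h0 : m % 2 = 0 := Nat.even_iff.mp h
    have h1 : (m-1) % 2 = 1 := by omega
    have h2 : (m+1) % 2 = 1 := by omega
    have hp : (-1:ℂ)^m = 1 := h.neg_one_pow
    rw [hp]
    ext a b
    fin_cases a <;> fin_cases b <;>
      simp [Mm, Em, sigma3, sigmaP, sigmaM, h0, h1, h2, Matrix.one_fin_two,
        Matrix.mul_apply, Fin.sum_univ_two] <;> ring
  · have h0 : m % 2 = 1 := Nat.odd_iff.mp h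
    have h1 : (m-1) % 2 = 0 := by omega
    have h2 : (m+1) % 2 = 0 := by omega
    have hp : (-1:ℂ)^m = -1 := h.neg_one_pow
    rw [hp]
    ext a b
    fin_cases a <;> fin_cases b <;>
      simp [Mm, Em, sigma3, sigmaP, sigmaM, h0, h1, h2, Matrix.one_fin_two,
        Matrix.mul_apply, Fin.sum_univ_two] <;> ring

/-! ### Differentiability and derivative computations -/

lemma diff_uex (K : ℕ) (s : Fin (2*K+2) → ℂ) (i : ℕ) :
    DifferentiableAt ℂ (fun t : Fin (2*K+2) → ℂ => uex K t i) s := by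
  unfold uex
  by_cases h : i < 2*K+2
  · simp only [dif_pos h]
    exact (ContinuousLinearMap.proj (R := ℂ) (φ := fun _ : Fin (2*K+2) => ℂ)
      ⟨i, h⟩).differentiableAt
  · simp only [dif_neg h]; exact differentiableAt_const 0

lemma diff_Rm_entry (K : ℕ) (s : Fin (2*K+2) → ℂ) (n : ℕ) (a b : Fin 2) :
    DifferentiableAt ℂ (fun t : Fin (2*K+2) → ℂ => Rm (uex K t) 0 n a b) s := by
  induction n generalizing a b with
  | zero => simp only [Rm_self]; exact differentiableAt_const _
  | succ n ih =>
    have key : (fun t : Fin (2*K+2) → ℂ => Rm (uex K t) 0 (n+1) a b)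
        = fun t => (Rm (uex K t) 0 n a 0) * ((1:Matrix (Fin 2) (Fin 2) ℂ) 0 b + uex K t n * Em n 0 b)
          + (Rm (uex K t) 0 n a 1) * ((1:Matrix (Fin 2) (Fin 2) ℂ) 1 b + uex K t n * Em n 1 b) := by
      funext t
      rw [Rm_succ _ (Nat.zero_le n), Matrix.mul_apply, Fin.sum_univ_two]
      simp [Mm, Matrix.add_apply, Matrix.smul_apply, smul_eq_mul]
    rw [key]
    exact ((ih a 0).mul ((differentiableAt_const _).add
        ((diff_uex K s n).mul (differentiableAt_const _)))).add
      ((ih a 1).mul ((differentiableAt_const _).add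
        ((diff_uex K s n).mul (differentiableAt_const _))))

lemma uex_update_ne (K : ℕ) (s : Fin (2*K+2) → ℂ) (j : Fin (2*K+2)) (z : ℂ) (i : ℕ)
    (h : i ≠ (j:ℕ)) : uex K (Function.update s j z) i = uex K s i := by
  unfold uex
  by_cases hi : i < 2*K+2
  · simp only [dif_pos hi]
    exact Function.update_of_ne (fun he => h (by simpa using congrArg Fin.val he)) _ _
  · simp [dif_neg hi]

lemma update_split (K : ℕ) (s : Fin (2*K+2) → ℂ) (j : Fin (2*K+2)) (z : ℂ) :
    Rm (uex K (Function.update s j z)) 0 (2*K+2)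
      = Rm (uex K s) 0 (j:ℕ) * (1 + z • Em (j:ℕ)) * Rm (uex K s) ((j:ℕ)+1) (2*K+2) := by
  have hj : (j:ℕ) < 2*K+2 := j.isLt
  set t := Function.update s j z with ht
  rw [Rm_mul (uex K t) (Nat.zero_le (j:ℕ)) (le_of_lt hj), Rm_cons (uex K t) hj]
  have h1 : Rm (uex K t) 0 (j:ℕ) = Rm (uex K s) 0 (j:ℕ) :=
    Rm_congr' _ _ (fun i _ hi => uex_update_ne K s j z i (by omega))
  have h2 : Rm (uex K t) ((j:ℕ)+1) (2*K+2) = Rm (uex K s) ((j:ℕ)+1) (2*K+2) :=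
    Rm_congr' _ _ (fun i hi _ => uex_update_ne K s j z i (by omega))
  have h3 : Mm (uex K t) (j:ℕ) = 1 + z • Em (j:ℕ) := by
    have : uex K t (j:ℕ) = z := by
      unfold uex
      simp only [dif_pos hj]
      rw [ht]
      have : (⟨(j:ℕ), hj⟩ : Fin (2*K+2)) = j := by ext; rfl
      rw [this, Function.update_self]
    rw [Mm, this]
  rw [h1, h2, h3, mul_assoc]

lemma hasDeriv_path (K : ℕ) (s : Fin (2*K+2) → ℂ) (lam : ℂ) (j : Fin (2*K+2)) (a b : Fin 2) :
    HasDerivAt (fun z : ℂ => (Rm (uex K (Function.update s j z)) 0 (2*K+2) * Dm lam) a b)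
      ((Rm (uex K s) 0 (j:ℕ) * Em (j:ℕ) * Rm (uex K s) ((j:ℕ)+1) (2*K+2) * Dm lam) a b)
      (s j) := by
  have key : ∀ z : ℂ, (Rm (uex K (Function.update s j z)) 0 (2*K+2) * Dm lam) a b
      = (Rm (uex K s) 0 (j:ℕ) * Rm (uex K s) ((j:ℕ)+1) (2*K+2) * Dm lam) a b
        + z * (Rm (uex K s) 0 (j:ℕ) * Em (j:ℕ) * Rm (uex K s) ((j:ℕ)+1) (2*K+2) * Dm lam) a b := by
    intro z
    rw [update_split K s j z]
    have : Rm (uex K s) 0 (j:ℕ) * (1 + z • Em (j:ℕ)) * Rm (uex K s) ((j:ℕ)+1) (2*K+2) * Dm lam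
        = Rm (uex K s) 0 (j:ℕ) * Rm (uex K s) ((j:ℕ)+1) (2*K+2) * Dm lam
          + z • (Rm (uex K s) 0 (j:ℕ) * Em (j:ℕ) * Rm (uex K s) ((j:ℕ)+1) (2*K+2) * Dm lam) := by
      rw [mul_add, add_mul, add_mul]
      simp [Matrix.mul_smul, Matrix.smul_mul]
    rw [this, Matrix.add_apply, Matrix.smul_apply, smul_eq_mul]
  have hfn : (fun z : ℂ => (Rm (uex K (Function.update s j z)) 0 (2*K+2) * Dm lam) a b)
      = fun z => (Rm (uex K s) 0 (j:ℕ) * Rm (uex K s) ((j:ℕ)+1) (2*K+2) * Dm lam) a b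
        + z * (Rm (uex K s) 0 (j:ℕ) * Em (j:ℕ) * Rm (uex K s) ((j:ℕ)+1) (2*K+2) * Dm lam) a b :=
    funext key
  rw [hfn]
  simpa using ((hasDerivAt_id (s j)).mul_const _).const_add
    ((Rm (uex K s) 0 (j:ℕ) * Rm (uex K s) ((j:ℕ)+1) (2*K+2) * Dm lam) a b)

lemma Mm_even (u : ℕ → ℂ) (i : ℕ) (h : i % 2 = 0) : Mm u i = Umat (u i) := by
  ext a b
  fin_cases a <;> fin_cases b <;> simp [Mm, Em, Umat, sigmaP, h, Matrix.one_fin_two]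

lemma Mm_odd (u : ℕ → ℂ) (i : ℕ) (h : i % 2 = 1) : Mm u i = Lmat (u i) := by
  ext a b
  fin_cases a <;> fin_cases b <;> simp [Mm, Em, Lmat, sigmaM, h, Matrix.one_fin_two]

lemma prodOfFn (u : ℕ → ℂ) (n : ℕ) :
    (List.ofFn fun i : Fin n => Mm u (2*(i:ℕ)) * Mm u (2*(i:ℕ)+1)).prod = Rm u 0 (2*n) := by
  induction n with
  | zero => simp [Rm_self]
  | succ n ih =>
    rw [List.ofFn_succ']
    simp only [List.concat_eq_append, List.prod_append, List.prod_cons, List.prod_nil,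
      Fin.coe_castSucc, Fin.val_last]
    rw [ih, mul_one]
    have h1 : 2*(n+1) = (2*n+1)+1 := by omega
    rw [h1, Rm_succ u (by omega), Rm_succ u (by omega), mul_assoc]

lemma Fmat_eq (K : ℕ) (t : Fin (2*K+2) → ℂ) (lm : ℂ) :
    Fmat K t lm = Rm (uex K t) 0 (2*K+2) * Dm lm := by
  have h : (List.ofFn fun i : Fin (K+1) =>
      Umat (t ⟨2*(i:ℕ), by have := i.isLt; omega⟩) *
      Lmat (t ⟨2*(i:ℕ)+1, by have := i.isLt; omega⟩))
      = (List.ofFn fun i : Fin (K+1) => Mm (uex K t) (2*(i:ℕ)) * Mm (uex K t) (2*(i:ℕ)+1)) := by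
    congr 1
    funext i
    rw [Mm_even _ _ (by omega), Mm_odd _ _ (by omega)]
    congr 1
    · unfold uex; rw [dif_pos]
    · unfold uex; rw [dif_pos]
  rw [Fmat, h, prodOfFn]
  have h2 : 2*(K+1) = 2*K+2 := by omega
  rw [h2, Dm]

lemma pS_F (K : ℕ) (s : Fin (2*K+2) → ℂ) (lam : ℂ) (j : Fin (2*K+2)) (a b : Fin 2) :
    pS K j (fun t lm => Fmat K t lm a b) s lam
      = (Rm (uex K s) 0 (j:ℕ) * Em (j:ℕ) * Rm (uex K s) ((j:ℕ)+1) (2*K+2) * Dm lam) a b := by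
  have hfun : (fun t => Fmat K t lam a b)
      = fun t : Fin (2*K+2) → ℂ => (Rm (uex K t) 0 (2*K+2) * Dm lam) a b := by
    funext t; rw [Fmat_eq]
  have hdiff : DifferentiableAt ℂ
      (fun t : Fin (2*K+2) → ℂ => (Rm (uex K t) 0 (2*K+2) * Dm lam) a b) s := by
    have h : (fun t : Fin (2*K+2) → ℂ => (Rm (uex K t) 0 (2*K+2) * Dm lam) a b)
        = fun t => Rm (uex K t) 0 (2*K+2) a 0 * Dm lam 0 b
            + Rm (uex K t) 0 (2*K+2) a 1 * Dm lam 1 b := by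
      funext t; rw [Matrix.mul_apply, Fin.sum_univ_two]
    rw [h]
    exact ((diff_Rm_entry K s _ a 0).mul_const _).add ((diff_Rm_entry K s _ a 1).mul_const _)
  set v : Fin (2*K+2) → ℂ := Pi.single j 1 with hv
  have hγ : HasDerivAt (fun z : ℂ => Function.update s j z) v (s j) := by
    have hfun2 : (fun z : ℂ => Function.update s j z)
        = fun z => s + (z - s j) • v := by
      funext z; funext k
      by_cases hk : k = j
      · subst hk
        simp [Function.update_self, hv, Pi.single_apply]
      · simp [Function.update_of_ne hk, hv, Pi.single_apply, hk]
    rw [hfun2]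
    simpa using (((hasDerivAt_id (s j)).sub_const (s j)).smul_const v).const_add s
  have hfd : HasFDerivAt (fun t : Fin (2*K+2) → ℂ => (Rm (uex K t) 0 (2*K+2) * Dm lam) a b)
      (fderiv ℂ (fun t : Fin (2*K+2) → ℂ => (Rm (uex K t) 0 (2*K+2) * Dm lam) a b) s)
      (Function.update s j (s j)) := by
    rw [Function.update_eq_self]; exact hdiff.hasFDerivAt
  have hcomp := hfd.comp_hasDerivAt (s j) hγ
  rw [pS, hfun]
  exact hcomp.unique (hasDeriv_path K s lam j a b)

lemma pL_F (K : ℕ) (s : Fin (2*K+2) → ℂ) (lam : ℂ) (hlam : lam ≠ 0) (a b : Fin 2) :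
    pL K (fun t lm => Fmat K t lm a b) s lam
      = lam⁻¹ * (Rm (uex K s) 0 (2*K+2) * sigma3 * Dm lam) a b := by
  set G := Rm (uex K s) 0 (2*K+2) with hG
  have hfun : (fun lm => Fmat K s lm a b) = fun lm => (G * Dm lm) a b := by
    funext lm; rw [Fmat_eq]
  rw [pL, hfun]
  have hrhs : (G * sigma3 * Dm lam) a b
      = (G a 0 * sigma3 0 0 + G a 1 * sigma3 1 0) * Dm lam 0 b
        + (G a 0 * sigma3 0 1 + G a 1 * sigma3 1 1) * Dm lam 1 b := by
    rw [Matrix.mul_apply, Fin.sum_univ_two, Matrix.mul_apply, Matrix.mul_apply,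
      Fin.sum_univ_two, Fin.sum_univ_two]
  have hb : b = 0 ∨ b = 1 := by
    fin_cases b
    · exact Or.inl rfl
    · exact Or.inr rfl
  rcases hb with rfl | rfl
  · have h1 : (fun lm => (G * Dm lm) a 0) = fun lm => G a 0 * lm + G a 1 * 0 := by
      funext lm; rw [Matrix.mul_apply, Fin.sum_univ_two]; simp [Dm]
    rw [h1]
    have hd : HasDerivAt (fun lm : ℂ => G a 0 * lm + G a 1 * 0) (G a 0) lam := by
      simpa using ((hasDerivAt_id lam).const_mul (G a 0)).add_const (G a 1 * 0)
    rw [hd.deriv, hrhs]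
    simp [sigma3, Dm]
    field_simp
  · have h1 : (fun lm => (G * Dm lm) a 1) = fun lm => G a 0 * 0 + G a 1 * lm⁻¹ := by
      funext lm; rw [Matrix.mul_apply, Fin.sum_univ_two]; simp [Dm]
    rw [h1]
    have hd : HasDerivAt (fun lm : ℂ => G a 0 * 0 + G a 1 * lm⁻¹) (G a 1 * (-(lam^2)⁻¹)) lam := by
      simpa using ((hasDerivAt_inv hlam).const_mul (G a 1)).const_add (G a 0 * 0)
    rw [hd.deriv, hrhs]
    simp only [sigma3, Dm]
    norm_num [Matrix.cons_val_zero, Matrix.cons_val_one]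
    rw [sq, mul_inv]
    ring

lemma pS_coord (K : ℕ) (s : Fin (2*K+2) → ℂ) (lam : ℂ) (mf j : Fin (2*K+2)) :
    pS K j (fun t _ => t mf) s lam = if j = mf then 1 else 0 := by
  rw [pS]
  have h : (fun t : Fin (2*K+2) → ℂ => t mf)
      = ⇑(ContinuousLinearMap.proj (R := ℂ) (φ := fun _ : Fin (2*K+2) => ℂ) mf) := rfl
  rw [h, ContinuousLinearMap.fderiv]
  have h2 : (ContinuousLinearMap.proj (R := ℂ) (φ := fun _ : Fin (2*K+2) => ℂ) mf)
      (Pi.single j 1) = (Pi.single j 1 : Fin (2*K+2) → ℂ) mf := rfl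
  rw [h2, Pi.single_apply]
  by_cases hjm : j = mf
  · simp [hjm]
  · simp [hjm, Ne.symm hjm]

lemma pL_coord (K : ℕ) (s : Fin (2*K+2) → ℂ) (lam : ℂ) (mf : Fin (2*K+2)) :
    pL K (fun t _ => t mf) s lam = 0 := by
  rw [pL]; exact deriv_const lam (s mf)

/-! ### Scalar telescoping quantities -/

def wF (u : ℕ → ℂ) (N : ℕ) (lam : ℂ) (a b : Fin 2) (i : ℕ) : ℂ :=
  (Rm u 0 i * Em i * Rm u (i+1) N * Dm lam) a b

def psiF (u : ℕ → ℂ) (N : ℕ) (lam : ℂ) (a b : Fin 2) (i : ℕ) : ℂ :=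
  (Rm u 0 i * sigma3 * Rm u i N * Dm lam) a b

lemma t1s (u : ℕ → ℂ) (N : ℕ) (lam : ℂ) (a b : Fin 2) (i : ℕ) (hi : i < N) :
    psiF u N lam a b (i+1) - psiF u N lam a b i
      = (-1:ℂ)^(i+1) * (2 * u i) * wF u N lam a b i := by
  have h1 : Rm u 0 (i+1) = Rm u 0 i * Mm u i := Rm_succ u (Nat.zero_le i)
  have h2 : Rm u i N = Mm u i * Rm u (i+1) N := Rm_cons u hi
  have key : Rm u 0 (i+1) * sigma3 * Rm u (i+1) N - Rm u 0 i * sigma3 * Rm u i N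
      = ((-1:ℂ)^(i+1) * (2 * u i)) • (Rm u 0 i * Em i * Rm u (i+1) N) := by
    have hmid : Rm u 0 i * Mm u i * sigma3 * Rm u (i+1) N
        - Rm u 0 i * sigma3 * (Mm u i * Rm u (i+1) N)
        = Rm u 0 i * (Mm u i * sigma3 - sigma3 * Mm u i) * Rm u (i+1) N := by noncomm_ring
    rw [h1, h2, hmid, commA u i, Matrix.mul_smul, Matrix.smul_mul]
  calc psiF u N lam a b (i+1) - psiF u N lam a b i
      = ((Rm u 0 (i+1) * sigma3 * Rm u (i+1) N - Rm u 0 i * sigma3 * Rm u i N) * Dm lam) a b := by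
        rw [Matrix.sub_mul, Matrix.sub_apply]; rfl
    _ = ((((-1:ℂ)^(i+1) * (2 * u i)) • (Rm u 0 i * Em i * Rm u (i+1) N)) * Dm lam) a b := by
        rw [key]
    _ = (-1:ℂ)^(i+1) * (2 * u i) * wF u N lam a b i := by
        rw [Matrix.smul_mul, Matrix.smul_apply, smul_eq_mul]; rfl

lemma t2s (u : ℕ → ℂ) (N : ℕ) (lam : ℂ) (a b : Fin 2) (m : ℕ) (hm1 : 1 ≤ m) (hm2 : m + 1 < N) :
    wF u N lam a b (m+1) - wF u N lam a b (m-1)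
      = (-1:ℂ)^m * u m * psiF u N lam a b m - u m ^ 2 * wF u N lam a b m := by
  obtain ⟨k, rfl⟩ : ∃ k, m = k + 1 := ⟨m - 1, by omega⟩
  simp only [Nat.add_sub_cancel]
  have e1 : Rm u 0 (k+1+1) = Rm u 0 k * Mm u k * Mm u (k+1) := by
    rw [Rm_succ u (by omega), Rm_succ u (by omega)]
  have e2 : Rm u 0 (k+1) = Rm u 0 k * Mm u k := Rm_succ u (by omega)
  have e3 : Rm u (k+1) N = Mm u (k+1) * (Mm u (k+1+1) * Rm u (k+1+1+1) N) := by
    rw [← Rm_cons u (by omega : k+1+1 < N), ← Rm_cons u (by omega : k+1 < N)]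
  have e4 : Rm u (k+1+1) N = Mm u (k+1+1) * Rm u (k+1+1+1) N := Rm_cons u (by omega)
  have key := congrArg (fun X => (X * Dm lam) a b)
    (congrArg (fun X => Rm u 0 k * X * Rm u (k+1+1+1) N) (localB u (k+1) (by omega)))
  simp only [Nat.add_sub_cancel] at key
  simp only [wF, psiF, e1, e2, e3, e4]
  simp only [mul_sub, sub_mul, Matrix.mul_smul, Matrix.smul_mul, smul_sub,
    Matrix.sub_apply, Matrix.smul_apply, smul_eq_mul, mul_assoc] at key ⊢
  convert key using 2

lemma telescope (f : ℕ → ℂ) (p q : ℕ) (h : p ≤ q) :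
    ∑ i ∈ Finset.Ico p q, (f (i+1) - f i) = f q - f p := by
  rw [Finset.sum_Ico_eq_sub _ h, Finset.sum_range_sub, Finset.sum_range_sub]
  ring

lemma Dm_comm (lam : ℂ) : Dm lam * sigma3 = sigma3 * Dm lam := by
  ext a b
  fin_cases a <;> fin_cases b <;> simp [Dm, sigma3, Matrix.mul_apply, Fin.sum_univ_two]

/-- for `2 ≤ ℓ ≤ 2K+1`, `{s_ℓ, F}_{FN} = (−1)^ℓ (s_ℓ/2)[F, σ3]`, entrywise,
identically on `ℂ^{2K+2} × ℂ*` (here `ℓ` is the paper's 1-based index, so `s_ℓ` is the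
coordinate with 0-based index `ℓ−1`). -/
theorem fn_bracket_sMiddle_F (K : ℕ) (hK : 1 ≤ K) (l : ℕ) (hl2 : 2 ≤ l) (hl : l ≤ 2*K+1)
    (s : Fin (2*K+2) → ℂ) (lam : ℂ) (hlam : lam ≠ 0) (a b : Fin 2) :
    fnBr K (fun t _ => t ⟨l-1, by omega⟩) (fun t lm => Fmat K t lm a b) s lam
      = (((-1:ℂ)^l * s ⟨l-1, by omega⟩ / 2) •
          (Fmat K s lam * sigma3 - sigma3 * Fmat K s lam)) a b := by
  -- basic index facts
  have hm : l - 1 < 2*K+2 := by omega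
  have hm1 : 1 ≤ l - 1 := by omega
  have hm2 : (l-1) + 1 < 2*K+2 := by omega
  set m : ℕ := l - 1 with hmdef
  have hlm : l = m + 1 := by omega
  set u : ℕ → ℂ := uex K s with hu
  set w : ℕ → ℂ := wF u (2*K+2) lam a b with hwdef
  set ψ : ℕ → ℂ := psiF u (2*K+2) lam a b with hpsidef
  set mfin : Fin (2*K+2) := ⟨m, hm⟩ with hmfin
  have hum : u m = s mfin := by rw [hu, uex, dif_pos hm]
  have hucoe : ∀ j : Fin (2*K+2), u (j:ℕ) = s j := by
    intro j; rw [hu, uex, dif_pos j.isLt]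
  -- derivatives
  have hpSg : ∀ j : Fin (2*K+2), pS K j (fun t lm => Fmat K t lm a b) s lam = w (j:ℕ) :=
    fun j => pS_F K s lam j a b
  have hpLg : pL K (fun t lm => Fmat K t lm a b) s lam = lam⁻¹ * ψ (2*K+2) := by
    rw [pL_F K s lam hlam a b, hpsidef, psiF, Rm_self, mul_one]
  have hpSf : ∀ j : Fin (2*K+2),
      pS K j (fun t _ => t mfin) s lam = if j = mfin then 1 else 0 :=
    fun j => pS_coord K s lam mfin j
  have hpLf : pL K (fun t _ => t mfin) s lam = 0 := pL_coord K s lam mfin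
  show fnBr K (fun t _ => t mfin) (fun t lm => Fmat K t lm a b) s lam
      = (((-1:ℂ)^l * s mfin / 2) •
          (Fmat K s lam * sigma3 - sigma3 * Fmat K s lam)) a b
  rw [fnBr]
  -- rewrite the double sum
  have hdouble : (∑ j : Fin (2*K+2), ∑ ll : Fin (2*K+2),
      if (j:ℕ) < (ll:ℕ) then
        cSS K j ll s lam *
          (pS K j (fun t _ => t mfin) s lam
              * pS K ll (fun t lm => Fmat K t lm a b) s lam
            - pS K ll (fun t _ => t mfin) s lam
              * pS K j (fun t lm => Fmat K t lm a b) s lam)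
      else 0)
      = (∑ ll : Fin (2*K+2), if m < (ll:ℕ) then cSS K mfin ll s lam * w (ll:ℕ) else 0)
        - ∑ j : Fin (2*K+2), if (j:ℕ) < m then cSS K j mfin s lam * w (j:ℕ) else 0 := by
    have hterm : ∀ j ll : Fin (2*K+2),
        (if (j:ℕ) < (ll:ℕ) then
          cSS K j ll s lam *
            ((if j = mfin then (1:ℂ) else 0) * w (ll:ℕ)
              - (if ll = mfin then (1:ℂ) else 0) * w (j:ℕ))
        else 0)
        = (if j = mfin then (if m < (ll:ℕ) then cSS K mfin ll s lam * w (ll:ℕ) else 0) else 0)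
          - (if ll = mfin then (if (j:ℕ) < m then cSS K j mfin s lam * w (j:ℕ) else 0) else 0) := by
      intro j ll
      rcases eq_or_ne j mfin with rfl | h1
      · rcases eq_or_ne ll mfin with rfl | h2
        · simp [hmfin]
        · have hc : ((mfin:Fin (2*K+2)):ℕ) = m := rfl
          simp only [if_pos rfl, if_neg h2, hc, sub_zero]
          by_cases h3 : m < (ll:ℕ)
          · simp [h3]
          · simp [h3]
      · rcases eq_or_ne ll mfin with rfl | h2
        · have hc : ((mfin:Fin (2*K+2)):ℕ) = m := rfl
          simp only [if_neg h1, if_pos rfl, hc, zero_sub]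
          by_cases h3 : (j:ℕ) < m
          · simp [h3]
          · simp [h3]
        · simp only [if_neg h1, if_neg h2, sub_zero]
          by_cases h3 : (j:ℕ) < (ll:ℕ)
          · simp [h3]
          · simp [h3]
    calc (∑ j : Fin (2*K+2), ∑ ll : Fin (2*K+2), _)
        = ∑ j : Fin (2*K+2), ∑ ll : Fin (2*K+2),
            ((if j = mfin then (if m < (ll:ℕ) then cSS K mfin ll s lam * w (ll:ℕ) else 0) else 0)
              - (if ll = mfin then (if (j:ℕ) < m then cSS K j mfin s lam * w (j:ℕ) else 0) else 0)) := by
          apply Finset.sum_congr rfl; intro j _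
          apply Finset.sum_congr rfl; intro ll _
          rw [hpSf j, hpSf ll, hpSg j, hpSg ll]
          exact hterm j ll
      _ = (∑ ll : Fin (2*K+2), if m < (ll:ℕ) then cSS K mfin ll s lam * w (ll:ℕ) else 0)
          - ∑ j : Fin (2*K+2), if (j:ℕ) < m then cSS K j mfin s lam * w (j:ℕ) else 0 := by
          simp only [Finset.sum_sub_distrib]
          congr 1
          · have step1 : ∀ j : Fin (2*K+2), (∑ ll : Fin (2*K+2),
                if j = mfin then (if m < (ll:ℕ) then cSS K mfin ll s lam * w (ll:ℕ) else 0) else 0)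
                = if j = mfin then (∑ ll : Fin (2*K+2),
                    if m < (ll:ℕ) then cSS K mfin ll s lam * w (ll:ℕ) else 0) else 0 := by
              intro j
              split_ifs
              · rfl
              · exact Finset.sum_const_zero
            rw [Finset.sum_congr rfl (fun j _ => step1 j), Finset.sum_ite_eq' Finset.univ mfin]
            simp
          · apply Finset.sum_congr rfl; intro j _
            rw [Finset.sum_ite_eq' Finset.univ mfin
              (fun _ => if (j:ℕ) < m then cSS K j mfin s lam * w (j:ℕ) else 0)]
            simp
  have ht1 : ∀ i, i < 2*K+2 → ψ (i+1) - ψ i = (-1:ℂ)^(i+1) * (2 * u i) * w i :=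
    fun i hi => t1s u (2*K+2) lam a b i hi
  have hmle : m ≤ 2*K := by omega
  -- the single sum
  have hsingle : (∑ j : Fin (2*K+2), cSL K j s lam *
      (pS K j (fun t _ => t mfin) s lam * pL K (fun t lm => Fmat K t lm a b) s lam
        - pL K (fun t _ => t mfin) s lam * pS K j (fun t lm => Fmat K t lm a b) s lam))
      = cSL K mfin s lam * (lam⁻¹ * ψ (2*K+2)) := by
    have hpt : ∀ j : Fin (2*K+2), cSL K j s lam *
        (pS K j (fun t _ => t mfin) s lam * pL K (fun t lm => Fmat K t lm a b) s lam
          - pL K (fun t _ => t mfin) s lam * pS K j (fun t lm => Fmat K t lm a b) s lam)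
        = if j = mfin then cSL K mfin s lam * (lam⁻¹ * ψ (2*K+2)) else 0 := by
      intro j
      rw [hpSf j, hpLg, hpLf, hpSg j]
      by_cases hj : j = mfin
      · subst hj
        rw [if_pos rfl, if_pos rfl]; ring
      · rw [if_neg hj, if_neg hj]; ring
    rw [Finset.sum_congr rfl (fun j _ => hpt j),
      Finset.sum_ite_eq' Finset.univ mfin (fun _ => cSL K mfin s lam * (lam⁻¹ * ψ (2*K+2)))]
    simp
  -- evaluate S1
  have hc1 : ∀ ll : Fin (2*K+2), (if m < (ll:ℕ) then cSS K mfin ll s lam * w (ll:ℕ) else 0)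
      = (if m < (ll:ℕ) then
          ((if m+1 = (ll:ℕ) then (1:ℂ) else 0) + (-1:ℂ)^(m+(ll:ℕ)+1) * u m * u (ll:ℕ)) * w (ll:ℕ)
        else 0) := by
    intro ll
    by_cases h3 : m < (ll:ℕ)
    · rw [if_pos h3, if_pos h3]
      congr 1
      rw [cSS]
      have hc : ((mfin:Fin (2*K+2)):ℕ) = m := rfl
      rw [hc, if_neg (by omega : ¬(m = 0 ∧ (ll:ℕ) = 2*K+1)), ← hum, ← hucoe ll, sub_zero]
    · rw [if_neg h3, if_neg h3]
  have hS1 : (∑ ll : Fin (2*K+2), if m < (ll:ℕ) then cSS K mfin ll s lam * w (ll:ℕ) else 0)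
      = w (m+1) + (-1:ℂ)^m * (u m / 2) * (ψ (2*K+2) - ψ (m+1)) := by
    rw [Finset.sum_congr rfl (fun ll _ => hc1 ll),
      Fin.sum_univ_eq_sum_range (fun i : ℕ => if m < i then
        ((if m+1 = i then (1:ℂ) else 0) + (-1:ℂ)^(m+i+1) * u m * u i) * w i else 0) (2*K+2)]
    have hfil : (∑ i ∈ Finset.range (2*K+2), if m < i then
        ((if m+1 = i then (1:ℂ) else 0) + (-1:ℂ)^(m+i+1) * u m * u i) * w i else 0)
        = ∑ i ∈ Finset.Ico (m+1) (2*K+2),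
            ((if m+1 = i then (1:ℂ) else 0) + (-1:ℂ)^(m+i+1) * u m * u i) * w i := by
      rw [← Finset.sum_filter]
      congr 1
      ext i
      simp only [Finset.mem_filter, Finset.mem_range, Finset.mem_Ico]
      omega
    rw [hfil]
    have hsplit : ∀ i : ℕ, ((if m+1 = i then (1:ℂ) else 0) + (-1:ℂ)^(m+i+1) * u m * u i) * w i
        = (if i = m+1 then w i else 0) + (-1:ℂ)^(m+i+1) * u m * u i * w i := by
      intro i
      by_cases h : m+1 = i
      · rw [if_pos h, if_pos h.symm]; ring
      · rw [if_neg h, if_neg (Ne.symm h)]; ring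
    rw [Finset.sum_congr rfl (fun i _ => hsplit i), Finset.sum_add_distrib,
      Finset.sum_ite_eq' (Finset.Ico (m+1) (2*K+2)) (m+1) w,
      if_pos (by simp only [Finset.mem_Ico]; omega)]
    congr 1
    calc (∑ i ∈ Finset.Ico (m+1) (2*K+2), (-1:ℂ)^(m+i+1) * u m * u i * w i)
        = ∑ i ∈ Finset.Ico (m+1) (2*K+2), (-1:ℂ)^m * (u m / 2) * (ψ (i+1) - ψ i) := by
          apply Finset.sum_congr rfl
          intro i hi
          rw [Finset.mem_Ico] at hi
          rw [ht1 i hi.2, show m+i+1 = m+(i+1) by omega, pow_add]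
          ring
      _ = (-1:ℂ)^m * (u m / 2) * (ψ (2*K+2) - ψ (m+1)) := by
          rw [← Finset.mul_sum, telescope ψ (m+1) (2*K+2) (by omega)]
  -- evaluate S2
  have hc2 : ∀ j : Fin (2*K+2), (if (j:ℕ) < m then cSS K j mfin s lam * w (j:ℕ) else 0)
      = (if (j:ℕ) < m then
          ((if (j:ℕ)+1 = m then (1:ℂ) else 0) + (-1:ℂ)^((j:ℕ)+m+1) * u (j:ℕ) * u m) * w (j:ℕ)
        else 0) := by
    intro j
    by_cases h3 : (j:ℕ) < m
    · rw [if_pos h3, if_pos h3]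
      congr 1
      rw [cSS]
      have hc : ((mfin:Fin (2*K+2)):ℕ) = m := rfl
      rw [hc, if_neg (by omega : ¬((j:ℕ) = 0 ∧ m = 2*K+1)), ← hum, ← hucoe j, sub_zero]
    · rw [if_neg h3, if_neg h3]
  have hS2 : (∑ j : Fin (2*K+2), if (j:ℕ) < m then cSS K j mfin s lam * w (j:ℕ) else 0)
      = w (m-1) + (-1:ℂ)^m * (u m / 2) * (ψ m - ψ 0) := by
    rw [Finset.sum_congr rfl (fun j _ => hc2 j),
      Fin.sum_univ_eq_sum_range (fun i : ℕ => if i < m then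
        ((if i+1 = m then (1:ℂ) else 0) + (-1:ℂ)^(i+m+1) * u i * u m) * w i else 0) (2*K+2)]
    have hfil : (∑ i ∈ Finset.range (2*K+2), if i < m then
        ((if i+1 = m then (1:ℂ) else 0) + (-1:ℂ)^(i+m+1) * u i * u m) * w i else 0)
        = ∑ i ∈ Finset.Ico 0 m,
            ((if i+1 = m then (1:ℂ) else 0) + (-1:ℂ)^(i+m+1) * u i * u m) * w i := by
      rw [← Finset.sum_filter]
      congr 1
      ext i
      simp only [Finset.mem_filter, Finset.mem_range, Finset.mem_Ico]
      omega
    rw [hfil]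
    have hsplit : ∀ i : ℕ, ((if i+1 = m then (1:ℂ) else 0) + (-1:ℂ)^(i+m+1) * u i * u m) * w i
        = (if i = m-1 then w i else 0) + (-1:ℂ)^(i+m+1) * u i * u m * w i := by
      intro i
      by_cases h : i+1 = m
      · rw [if_pos h, if_pos (by omega)]; ring
      · rw [if_neg h, if_neg (by omega)]; ring
    rw [Finset.sum_congr rfl (fun i _ => hsplit i), Finset.sum_add_distrib,
      Finset.sum_ite_eq' (Finset.Ico 0 m) (m-1) w,
      if_pos (by simp only [Finset.mem_Ico]; omega)]
    congr 1
    calc (∑ i ∈ Finset.Ico 0 m, (-1:ℂ)^(i+m+1) * u i * u m * w i)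
        = ∑ i ∈ Finset.Ico 0 m, (-1:ℂ)^m * (u m / 2) * (ψ (i+1) - ψ i) := by
          apply Finset.sum_congr rfl
          intro i hi
          rw [Finset.mem_Ico] at hi
          rw [ht1 i (by omega), show i+m+1 = m+(i+1) by omega, pow_add]
          ring
      _ = (-1:ℂ)^m * (u m / 2) * (ψ m - ψ 0) := by
          rw [← Finset.mul_sum, telescope ψ 0 m (by omega)]
  -- cSL value
  have hcSL : cSL K mfin s lam = (-1:ℂ)^(m+1) * u m * lam := by
    have hc : ((mfin:Fin (2*K+2)):ℕ) = m := rfl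
    rw [cSL, hc, ← hum]
  -- RHS value
  have hpsiN : ψ (2*K+2) = (Rm u 0 (2*K+2) * sigma3 * Dm lam) a b := by
    rw [hpsidef]; unfold psiF; rw [Rm_self, mul_one]
  have hpsi0 : ψ 0 = (sigma3 * (Rm u 0 (2*K+2) * Dm lam)) a b := by
    rw [hpsidef]; unfold psiF; rw [Rm_self, one_mul, mul_assoc]
  have hRHS : (((-1:ℂ)^l * s mfin / 2) •
      (Fmat K s lam * sigma3 - sigma3 * Fmat K s lam)) a b
      = (-1:ℂ)^(m+1) * u m / 2 * (ψ (2*K+2) - ψ 0) := by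
    rw [Matrix.smul_apply, Matrix.sub_apply, smul_eq_mul, hlm, ← hum]
    have hF : Fmat K s lam = Rm u 0 (2*K+2) * Dm lam := by
      rw [Fmat_eq, ← hu]
    rw [hF]
    have h1 : Rm u 0 (2*K+2) * Dm lam * sigma3 = Rm u 0 (2*K+2) * sigma3 * Dm lam := by
      rw [mul_assoc, Dm_comm, ← mul_assoc]
    rw [h1, ← hpsiN, ← hpsi0]
  -- final combination
  rw [hdouble, hsingle, hS1, hS2, hcSL, hRHS]
  have ht2 : w (m+1) - w (m-1) = (-1:ℂ)^m * u m * ψ m - u m ^ 2 * w m :=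
    t2s u (2*K+2) lam a b m hm1 hm2
  have ht1m : ψ (m+1) - ψ m = (-1:ℂ)^(m+1) * (2 * u m) * w m := ht1 m (by omega)
  have he2 : (-1:ℂ)^m * (-1:ℂ)^m = 1 := by
    rw [← pow_add, show m+m = 2*m by omega, pow_mul]
    norm_num
  have hinv : lam * lam⁻¹ = 1 := mul_inv_cancel₀ hlam
  rw [pow_succ] at ht1m ⊢
  linear_combination ht2 + (-(((-1:ℂ)^m) * u m)/2) * ht1m + (u m^2 * w m) * he2
    + (-((-1:ℂ)^m * u m * ψ (2*K+2))) * hinv
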